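/- arXiv:2307.03036 — 5 statements merged into one kernel-verified Lean document; each statement's English description precedes it below -/
import Mathlib

section
/- Assume there exists κ > 0 such that reg(l) + κ ≤ α(l) for every l ∈ 𝔏, and such that every n ∈ ℕ^d satisfies either |n| < ν or |n| > ν + 2κ. Then every β ∈ N_min satisfies |β| > ν − η + κ·ℓ(β) + (1/2)·Σ_{n ∈ ℕ^d} (|n| − ν)·β(n). -/
open scoped Classical

noncomputable section

/-- The set of `d`-tuples of natural numbers, `ℕ^d`. -/
abbrev Nd (d : ℕ) : Type := Fin d → ℕ

/-- Multi-indices over `ℕ^d`: finitely supported functions `ℕ^d → ℕ`. -/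
abbrev MNd (d : ℕ) : Type := Nd d →₀ ℕ

/-- The coordinate set `coord = (𝔏 × M(ℕ^d)) ⊔ ℕ^d`, where `𝔏 = 𝔏⁻ ∪ {0}` is
modelled as `Option Lm` (with `none` playing the role of the element `0`). -/
abbrev Coord (Lm : Type) (d : ℕ) : Type := (Option Lm × MNd d) ⊕ Nd d

/-- Multi-indices over `coord`. -/
abbrev MCoord (Lm : Type) (d : ℕ) : Type := Coord Lm d →₀ ℕ

variable {Lm : Type} {d : ℕ}

/-- Length `ℓ(m)` of a multi-index. -/
def mlen {I : Type} (m : I →₀ ℕ) : ℕ := m.sum fun _ v => v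

/-- The `i`-th unit vector of `ℕ^d`. -/
def unitNd (i : Fin d) : Nd d := Pi.single i 1

/-- The coefficient `(z^{γ'} D^{(n')})_β^γ`. -/
def coefZD (γ' : MCoord Lm d) (n' : Nd d) (β γ : MCoord Lm d) : ℝ :=
  (γ.sum fun x v =>
    match x with
    | Sum.inl (l, k) =>
        (v : ℝ) * ((k n' : ℝ) + 1) *
          (if β + Finsupp.single (Sum.inl (l, k)) 1 =
              γ + Finsupp.single (Sum.inl (l, k + Finsupp.single n' 1)) 1 + γ'
           then 1 else 0)
    | Sum.inr _ => 0) +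
  ((γ (Sum.inr n') : ℝ) *
    (if β + Finsupp.single (Sum.inr n') 1 = γ + γ' then 1 else 0))

/-- The coefficient `(D^{(n')})_β^γ`. -/
def coefD (n' : Nd d) (β γ : MCoord Lm d) : ℝ := coefZD 0 n' β γ

/-- The coefficient `(∂_i)_β^γ`. -/
def coefPartial (i : Fin d) (β γ : MCoord Lm d) : ℝ :=
  ∑ᶠ n : Nd d,
    ((n i : ℝ) + 1) * coefZD (Finsupp.single (Sum.inr (n + unitNd i)) 1) n β γ

/-- `[β]`. -/
def brkt (β : MCoord Lm d) : ℤ :=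
  β.sum fun x v =>
    match x with
    | Sum.inl (_, k) => (1 - (mlen k : ℤ)) * (v : ℤ)
    | Sum.inr _ => (v : ℤ)

/-- Noise homogeneity `⟦β⟧`. -/
def nh (β : MCoord Lm d) : ℕ :=
  β.sum fun x v =>
    match x with
    | Sum.inl (some _, _) => v
    | Sum.inl (none, _) => 0
    | Sum.inr _ => 0

/-- Scaled degree `|n|` of `n ∈ ℕ^d`. -/
def snorm (s : Fin d → ℝ) (n : Nd d) : ℝ := ∑ i, s i * (n i : ℝ)

/-- A subcritical pair `(l,k)`. -/
def Subcritical {L : Type} (s : Fin d → ℝ) (η : ℝ) (reg : L → ℝ) (ν : ℝ)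
    (l : L) (k : MNd d) : Prop :=
  ν < η + reg l ∧
  ∀ k' : MNd d, 0 < k' → k' ≤ k →
    ν < η + (k'.sum fun n v => (ν - snorm s n) * (v : ℝ)) ∧
    ν < η + reg l + (k'.sum fun n v => (ν - snorm s n) * (v : ℝ))

/-- A subcritical multi-index. -/
def SubcriticalM (s : Fin d → ℝ) (η : ℝ) (reg : Option Lm → ℝ) (ν : ℝ)
    (β : MCoord Lm d) : Prop :=
  ∀ (l : Option Lm) (k : MNd d), β (Sum.inl (l, k)) ≠ 0 → Subcritical s η reg ν l k

/-- Homogeneity `|β|`. -/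
def homg (s : Fin d → ℝ) (η : ℝ) (α : Option Lm → ℝ) (β : MCoord Lm d) : ℝ :=
  β.sum fun x v =>
    match x with
    | Sum.inl (l, k) =>
        (α l + k.sum fun n v' => (η - snorm s n) * (v' : ℝ)) * (v : ℝ)
    | Sum.inr n => (snorm s n - η) * (v : ℝ)

/-- The set `N_min`. -/
def Nmin (s : Fin d → ℝ) (η : ℝ) (reg : Option Lm → ℝ) (ν : ℝ) :
    Set (MCoord Lm d) :=
  {β | brkt β = 1 ∧ SubcriticalM s η reg ν β ∧
       ∀ n : Nd d, snorm s n < ν → β (Sum.inr n) = 0}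

/-- The set `N`. -/
def NSet (s : Fin d → ℝ) (η : ℝ) (reg : Option Lm → ℝ) (ν : ℝ) :
    Set (MCoord Lm d) :=
  {β | β ∈ Nmin s η reg ν ∧ 0 < nh β}

/-- The purely polynomial set `P = {e_n}`. -/
def PolySet : Set (MCoord Lm d) :=
  {β | ∃ n : Nd d, β = Finsupp.single (Sum.inr n) 1}

/-- `populated = P ∪ N`. -/
def Populated (s : Fin d → ℝ) (η : ℝ) (reg : Option Lm → ℝ) (ν : ℝ) :
    Set (MCoord Lm d) :=
  PolySet ∪ NSet s η reg ν

/-- The subcritical coefficient `(z^{γ'} D^{(n')})^{sc}_β^γ`. -/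
def coefZDsc (s : Fin d → ℝ) (η : ℝ) (reg : Option Lm → ℝ) (ν : ℝ)
    (γ' : MCoord Lm d) (n' : Nd d) (β γ : MCoord Lm d) : ℝ :=
  (γ.sum fun x v =>
    match x with
    | Sum.inl (l, k) =>
        if Subcritical s η reg ν l (k + Finsupp.single n' 1) then
          (v : ℝ) * ((k n' : ℝ) + 1) *
            (if β + Finsupp.single (Sum.inl (l, k)) 1 =
                γ + Finsupp.single (Sum.inl (l, k + Finsupp.single n' 1)) 1 + γ'
             then 1 else 0)
        else 0
    | Sum.inr _ => 0) +
  ((γ (Sum.inr n') : ℝ) *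
    (if β + Finsupp.single (Sum.inr n') 1 = γ + γ' then 1 else 0))

/-- The subcritical coefficient `(∂_i)^{sc}_β^γ`. -/
def coefPartialSc (s : Fin d → ℝ) (η : ℝ) (reg : Option Lm → ℝ) (ν : ℝ)
    (i : Fin d) (β γ : MCoord Lm d) : ℝ :=
  ∑ᶠ n : Nd d,
    ((n i : ℝ) + 1) *
      coefZDsc s η reg ν (Finsupp.single (Sum.inr (n + unitNd i)) 1) n β γ

/-- `⌊β⌋ := Σ_n |n|·β(n)`. -/
def polydeg (s : Fin d → ℝ) (β : MCoord Lm d) : ℝ :=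
  β.sum fun x v =>
    match x with
    | Sum.inl _ => 0
    | Sum.inr n => snorm s n * (v : ℝ)

/-- `Σ_n (|n| − ν)·β(n)`. -/
def polyexcess (s : Fin d → ℝ) (ν : ℝ) (β : MCoord Lm d) : ℝ :=
  β.sum fun x v =>
    match x with
    | Sum.inl _ => 0
    | Sum.inr n => (snorm s n - ν) * (v : ℝ)

/-- `|β|_≺ := λ₁·ℓ(β) + λ₂·⟦β⟧ + λ₃·⌊β⌋`. -/
def ordPrec (s : Fin d → ℝ) (lam1 lam2 lam3 : ℝ) (β : MCoord Lm d) : ℝ :=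
  lam1 * (mlen β : ℝ) + lam2 * (nh β : ℝ) + lam3 * polydeg s β

theorem stmt8 {Lm : Type} [Fintype Lm] {d : ℕ} (hd : 1 ≤ d)
    (s : Fin d → ℝ) (hs : ∀ i, 1 ≤ s i) (η : ℝ)
    (α reg : Option Lm → ℝ) (ν : ℝ) (κ : ℝ) (hκ : 0 < κ)
    (h1 : ∀ l : Option Lm, reg l + κ ≤ α l)
    (h2 : ∀ n : Nd d, snorm s n < ν ∨ ν + 2 * κ < snorm s n)
    (β : MCoord Lm d) (hβ : β ∈ Nmin s η reg ν) :
    ν - η + κ * (mlen β : ℝ) + (1 / 2) * polyexcess s ν β < homg s η α β := by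
  classical
  obtain ⟨hbr, hsc, hpoly⟩ := hβ
  have hne : β.support.Nonempty := by
    rcases Finset.eq_empty_or_nonempty β.support with h | h
    · exfalso
      have hz : β = 0 := Finsupp.support_eq_empty.mp h
      rw [hz] at hbr
      simp [brkt] at hbr
    · exact h
  -- the real-valued "brkt" summand
  set gR : Coord Lm d → ℝ := fun x =>
    match x with
    | Sum.inl (_, k) => (1 - (mlen k : ℝ)) * (β x : ℝ)
    | Sum.inr _ => (β x : ℝ) with hgR
  set gP : Coord Lm d → ℝ := fun x =>
    match x with
    | Sum.inl _ => (0 : ℝ)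
    | Sum.inr n => (snorm s n - ν) * (β x : ℝ) with hgP
  set gH : Coord Lm d → ℝ := fun x =>
    match x with
    | Sum.inl (l, k) =>
        (α l + k.sum fun n v' => (η - snorm s n) * (v' : ℝ)) * (β x : ℝ)
    | Sum.inr n => (snorm s n - η) * (β x : ℝ) with hgH
  have main : ∑ x ∈ β.support,
      ((ν - η) * gR x + κ * (β x : ℝ) + (1 / 2) * gP x)
      < ∑ x ∈ β.support, gH x := by
    apply Finset.sum_lt_sum_of_nonempty hne
    intro x hx
    have hv0 : β x ≠ 0 := Finsupp.mem_support_iff.mp hx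
    have hv : (1 : ℝ) ≤ (β x : ℝ) := by
      exact_mod_cast Nat.one_le_iff_ne_zero.mpr hv0
    rcases x with ⟨l, k⟩ | n
    · -- noise term
      have hlk : Subcritical s η reg ν l k := hsc l k hv0
      have hK : (k.sum fun n v => (ν - snorm s n) * (v : ℝ))
          = (k.sum fun n v => (η - snorm s n) * (v : ℝ)) + (ν - η) * (mlen k : ℝ) := by
        rw [mlen, Finsupp.sum, Finsupp.sum, Finsupp.sum, Nat.cast_sum,
          Finset.mul_sum, ← Finset.sum_add_distrib]
        exact Finset.sum_congr rfl fun n _ => by ring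
      have hcoef : (ν - η) * (1 - (mlen k : ℝ)) + κ
          < α l + k.sum fun n v => (η - snorm s n) * (v : ℝ) := by
        rcases eq_or_ne k 0 with hk | hk
        · subst hk
          have h0 : ((0 : MNd d).sum fun n v => (η - snorm s n) * (v : ℝ)) = 0 :=
            Finsupp.sum_zero_index
        -- mlen 0 = 0
          have h0' : mlen (0 : MNd d) = 0 := by simp [mlen]
          rw [h0, h0']
          have := hlk.1
          have := h1 l
          push_cast
          linarith
        · have hkpos : 0 < k := pos_iff_ne_zero.mpr hk
          have hsub := (hlk.2 k hkpos le_rfl).2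
          have := h1 l
          rw [hK] at hsub
          linarith
      have := mul_lt_mul_of_pos_right hcoef (lt_of_lt_of_le one_pos hv)
      show (ν - η) * ((1 - (mlen k : ℝ)) * (β (Sum.inl (l, k)) : ℝ)) + κ * (β (Sum.inl (l, k)) : ℝ) + (1/2) * 0
          < (α l + k.sum fun n v' => (η - snorm s n) * (v' : ℝ)) * (β (Sum.inl (l, k)) : ℝ)
      nlinarith
    · -- polynomial term
      have hn : ν + 2 * κ < snorm s n := by
        rcases h2 n with h | h
        · exact absurd (hpoly n h) hv0
        · exact h
      have hcoef : (ν - η) + κ + (1 / 2) * (snorm s n - ν) < snorm s n - η := by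
        linarith
      have := mul_lt_mul_of_pos_right hcoef (lt_of_lt_of_le one_pos hv)
      show (ν - η) * (β (Sum.inr n) : ℝ) + κ * (β (Sum.inr n) : ℝ)
            + (1/2) * ((snorm s n - ν) * (β (Sum.inr n) : ℝ))
          < (snorm s n - η) * (β (Sum.inr n) : ℝ)
      nlinarith
  -- identify both sides of `main` with the goal
  have eH : homg s η α β = ∑ x ∈ β.support, gH x := by
    rw [homg, Finsupp.sum]
  have eR : ∑ x ∈ β.support, gR x = 1 := by
    have hb : (brkt β : ℝ) = 1 := by rw [hbr]; norm_num
    rw [brkt, Finsupp.sum, Int.cast_sum] at hb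
    rw [← hb]
    refine Finset.sum_congr rfl fun x _ => ?_
    rcases x with ⟨l, k⟩ | n <;> simp [hgR] <;> push_cast <;> ring
  have eM : (mlen β : ℝ) = ∑ x ∈ β.support, (β x : ℝ) := by
    rw [mlen, Finsupp.sum, Nat.cast_sum]
  have eP : polyexcess s ν β = ∑ x ∈ β.support, gP x := by
    rw [polyexcess, Finsupp.sum]
  have esplit : ∑ x ∈ β.support,
      ((ν - η) * gR x + κ * (β x : ℝ) + (1 / 2) * gP x)
      = (ν - η) * (∑ x ∈ β.support, gR x) + κ * (∑ x ∈ β.support, (β x : ℝ))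
        + (1 / 2) * (∑ x ∈ β.support, gP x) := by
    rw [Finset.mul_sum, Finset.mul_sum, Finset.mul_sum, ← Finset.sum_add_distrib,
      ← Finset.sum_add_distrib]
  rw [esplit, eR, mul_one, ← eM, ← eP, ← eH] at main
  linarith


end
end

section
/- Assume reg(l) < α(l) for every l ∈ 𝔏 and ν ∉ {|n| : n ∈ ℕ^d}. Then for every a ∈ ℝ the set {β ∈ populated ∪ N_min : |β| < a} is finite. -/
open scoped Classical

noncomputable section

variable {Lm : Type} {d : ℕ}

section Helpers


/-- finite set of positive reals has a positive lower bound -/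
lemma exists_pos_lb {S : Set ℝ} (hS : S.Finite) (hpos : ∀ x ∈ S, 0 < x) :
    ∃ δ, 0 < δ ∧ ∀ x ∈ S, δ ≤ x := by
  rcases S.eq_empty_or_nonempty with h | h
  · exact ⟨1, one_pos, by simp [h]⟩
  · obtain ⟨m, hm, hmin⟩ := Set.exists_min_image S id hS h
    exact ⟨m, hpos m hm, hmin⟩

/-- finsupps with support in a finite set and bounded values form a finite set -/
lemma finsupp_bdd_finite {I : Type*} {G : Set I} (hG : G.Finite) (M : ℕ) :
    {f : I →₀ ℕ | ↑f.support ⊆ G ∧ ∀ x, f x ≤ M}.Finite := by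
  classical
  haveI := hG.to_subtype
  apply Set.Finite.of_finite_image (f := fun (f : I →₀ ℕ) => (fun x : G => f ↑x))
  · apply Set.Finite.subset (Set.Finite.pi (t := fun _ : G => Set.Iic M)
      (fun _ => Set.finite_Iic M))
    rintro g ⟨f, hf, rfl⟩
    intro x _
    exact hf.2 x
  · rintro f ⟨hf1, hf2⟩ f' ⟨hf1', hf2'⟩ h
    ext x
    by_cases hx : x ∈ G
    · exact congrFun h ⟨x, hx⟩
    · have h1 : f x = 0 := by
        by_contra hc
        exact hx (hf1 (Finsupp.mem_support_iff.2 hc))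
      have h2 : f' x = 0 := by
        by_contra hc
        exact hx (hf1' (Finsupp.mem_support_iff.2 hc))
      rw [h1, h2]


variable {Lm : Type} {d : ℕ}

lemma snorm_nonneg' (s : Fin d → ℝ) (hs : ∀ i, 1 ≤ s i) (n : Nd d) : 0 ≤ snorm s n := by
  apply Finset.sum_nonneg
  intro i _
  have := hs i
  positivity

lemma coord_le_snorm (s : Fin d → ℝ) (hs : ∀ i, 1 ≤ s i) (n : Nd d) (i : Fin d) :
    (n i : ℝ) ≤ snorm s n := by
  have h1 : (n i : ℝ) ≤ s i * (n i : ℝ) := by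
    have h0 : (0:ℝ) ≤ (n i : ℝ) := Nat.cast_nonneg _
    nlinarith [hs i, h0]
  refine h1.trans ?_
  apply Finset.single_le_sum (f := fun j => s j * (n j : ℝ)) ?_ (Finset.mem_univ i)
  intro j _
  have := hs j
  positivity

lemma finite_snorm_le (s : Fin d → ℝ) (hs : ∀ i, 1 ≤ s i) (C : ℝ) :
    {n : Nd d | snorm s n ≤ C}.Finite := by
  have hfin : (Set.univ.pi fun _ : Fin d => Set.Iic (⌈C⌉₊ : ℕ)).Finite :=
    Set.Finite.pi fun _ => Set.finite_Iic _
  refine hfin.subset ?_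
  intro n hn i _
  have h1 : (n i : ℝ) ≤ C := (coord_le_snorm s hs n i).trans hn
  have h2 : (n i : ℝ) ≤ (⌈C⌉₊ : ℝ) := h1.trans (Nat.le_ceil C)
  exact_mod_cast h2

lemma le_mlen {I : Type} (k : I →₀ ℕ) (i : I) : k i ≤ mlen k := by
  by_cases hi : i ∈ k.support
  · exact Finset.single_le_sum (f := fun j => k j) (fun _ _ => Nat.zero_le _) hi
  · simp [Finsupp.notMem_support_iff.1 hi]


lemma filter_le_self' {I : Type*} (p : I → Prop) (k : I →₀ ℕ) : Finsupp.filter p k ≤ k := by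
  classical
  rw [Finsupp.le_def]
  intro i
  rw [Finsupp.filter_apply]
  split_ifs <;> simp

lemma subcritical_supp_lt {s : Fin d → ℝ} {η : ℝ} {reg : Option Lm → ℝ} {ν : ℝ}
    {l : Option Lm} {k : MNd d} (h : Subcritical s η reg ν l k) {n : Nd d}
    (hn : k n ≠ 0) : snorm s n < η := by
  classical
  have hpos : (0 : MNd d) < Finsupp.single n 1 := by
    rw [pos_iff_ne_zero]
    simp [Finsupp.single_eq_zero]
  have hle : Finsupp.single n 1 ≤ k := by
    rw [Finsupp.le_def]
    intro i
    rw [Finsupp.single_apply]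
    split_ifs with hi
    · subst hi; omega
    · omega
  have := (h.2 _ hpos hle).1
  rw [Finsupp.sum_single_index (by simp)] at this
  push_cast at this
  linarith

lemma subcritical_high {s : Fin d → ℝ} {η : ℝ} {reg : Option Lm → ℝ} {ν : ℝ}
    {l : Option Lm} {k : MNd d} (h : Subcritical s η reg ν l k) :
    ν - η - reg l <
      ∑ n ∈ k.support.filter (fun n => ν < snorm s n), (ν - snorm s n) * (k n : ℝ) := by
  classical
  set khi := Finsupp.filter (fun n => ν < snorm s n) k with hkhi
  have hsupp : khi.support = k.support.filter (fun n => ν < snorm s n) :=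
    Finsupp.support_filter _ _
  have hsum : ∑ n ∈ k.support.filter (fun n => ν < snorm s n),
      (ν - snorm s n) * (k n : ℝ) = khi.sum (fun n v => (ν - snorm s n) * (v : ℝ)) := by
    rw [Finsupp.sum, hsupp]
    apply Finset.sum_congr rfl
    intro n hn
    rw [show khi n = k n from Finsupp.filter_apply_pos _ _ (Finset.mem_filter.1 hn).2]
  rw [hsum]
  by_cases h0 : khi = 0
  · rw [h0]
    simp only [Finsupp.sum_zero_index]
    linarith [h.1]
  · have hpos : (0 : MNd d) < khi := pos_iff_ne_zero.2 (Ne.symm (fun he => h0 he.symm))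
    have := (h.2 khi hpos (filter_le_self' _ _)).2
    linarith

lemma subcritical_full {s : Fin d → ℝ} {η : ℝ} {reg : Option Lm → ℝ} {ν : ℝ}
    {l : Option Lm} {k : MNd d} (h : Subcritical s η reg ν l k) :
    ν - η - reg l < k.sum (fun n v => (ν - snorm s n) * (v : ℝ)) := by
  classical
  by_cases h0 : k = 0
  · rw [h0]
    simp only [Finsupp.sum_zero_index]
    linarith [h.1]
  · have hpos : (0 : MNd d) < k := pos_iff_ne_zero.2 (Ne.symm (fun he => h0 he.symm))
    have := (h.2 k hpos le_rfl).2
    linarith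


/-- per-unit combined weight function -/
def auxF (s : Fin d → ℝ) (η ν : ℝ) (α : Option Lm → ℝ) : Coord Lm d → ℝ :=
  Sum.elim
    (fun p => α p.1 + (η - ν) + p.2.sum fun n v => (ν - snorm s n) * (v : ℝ))
    (fun n => snorm s n - ν)

/-- per-unit size weight -/
def auxW (s : Fin d → ℝ) : Coord Lm d → ℝ :=
  Sum.elim (fun p => 1 + (mlen p.2 : ℝ)) (fun n => 1 + snorm s n)

lemma sum_shift (s : Fin d → ℝ) (η ν : ℝ) (k : MNd d) :
    (k.sum fun n v => (η - snorm s n) * (v : ℝ)) + (η - ν) * (1 - (mlen k : ℝ)) =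
      (η - ν) + k.sum fun n v => (ν - snorm s n) * (v : ℝ) := by
  have h1 : ((mlen k : ℕ) : ℝ) = ∑ n ∈ k.support, (k n : ℝ) := by
    rw [mlen, Finsupp.sum]
    push_cast
    rfl
  rw [h1, Finsupp.sum, Finsupp.sum, mul_sub, mul_one, Finset.mul_sum]
  have h2 : (∑ n ∈ k.support, (η - snorm s n) * (k n : ℝ)) -
      ∑ n ∈ k.support, (η - ν) * (k n : ℝ) =
      ∑ n ∈ k.support, (ν - snorm s n) * (k n : ℝ) := by
    rw [← Finset.sum_sub_distrib]
    exact Finset.sum_congr rfl fun n _ => by ring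
  linarith

lemma homg_eq (s : Fin d → ℝ) (η : ℝ) (α : Option Lm → ℝ) (ν : ℝ) (β : MCoord Lm d)
    (hb : brkt β = 1) :
    homg s η α β + (η - ν) = ∑ c ∈ β.support, auxF s η ν α c * (β c : ℝ) := by
  have hbr : ((brkt β : ℤ) : ℝ) = ∑ c ∈ β.support,
      (Sum.elim (fun p : Option Lm × MNd d => 1 - (mlen p.2 : ℝ)) (fun _ => 1) c) *
        (β c : ℝ) := by
    rw [brkt, Finsupp.sum]
    push_cast
    refine Finset.sum_congr rfl ?_
    rintro (⟨l, k⟩ | n) -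
    · simp only [Sum.elim_inl]
      push_cast
      ring
    · simp only [Sum.elim_inr]
      push_cast
      ring
  have hhg : homg s η α β = ∑ c ∈ β.support,
      (Sum.elim (fun p : Option Lm × MNd d =>
          α p.1 + p.2.sum fun n v => (η - snorm s n) * (v : ℝ))
        (fun n => snorm s n - η) c) * (β c : ℝ) := by
    rw [homg, Finsupp.sum]
    refine Finset.sum_congr rfl ?_
    rintro (⟨l, k⟩ | n) - <;> rfl
  have key : homg s η α β + (η - ν) * ((brkt β : ℤ) : ℝ) =
      ∑ c ∈ β.support, auxF s η ν α c * (β c : ℝ) := by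
    rw [hhg, hbr, Finset.mul_sum, ← Finset.sum_add_distrib]
    refine Finset.sum_congr rfl ?_
    rintro (⟨l, k⟩ | n) -
    · have := sum_shift s η ν k
      simp only [Sum.elim_inl, auxF]
      nlinarith [this]
    · simp only [Sum.elim_inr, auxF]
      ring
  rw [hb] at key
  push_cast at key
  linarith [key]


lemma arith1 {κ T lam m : ℝ} (hκ : 0 < κ) (hT0 : 0 ≤ T) (hlam2 : lam ≤ κ / (1 + T))
    (hlam0 : 0 < lam) (hm0 : 0 ≤ m) (hm : m ≤ T) : lam * (1 + m) ≤ κ := by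
  have h6 : lam * (1 + m) ≤ (κ / (1 + T)) * (1 + T) := by
    apply mul_le_mul hlam2 (by linarith) (by linarith) (by positivity)
  rwa [div_mul_cancel₀ _ (by linarith : (1 : ℝ) + T ≠ 0)] at h6

lemma arith2 {δ H A R m lam : ℝ} (hδ : 0 < δ) (hlam : lam ≤ δ / 2) (hlam0 : 0 < lam)
    (hm : 0 ≤ m) (hT' : 1 + 2 * H - 2 * (A - R) / δ < m) :
    lam * (1 + m) ≤ (A - R) + δ * (m - H) := by
  have hdiv : 2 * (A - R) / δ * δ = 2 * (A - R) := div_mul_cancel₀ _ (ne_of_gt hδ)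
  nlinarith

end Helpers

set_option maxHeartbeats 1000000

theorem stmt9 {Lm : Type} [Fintype Lm] {d : ℕ} (hd : 1 ≤ d)
    (s : Fin d → ℝ) (hs : ∀ i, 1 ≤ s i) (η : ℝ)
    (α reg : Option Lm → ℝ) (ν : ℝ)
    (h1 : ∀ l : Option Lm, reg l < α l)
    (h2 : ∀ n : Nd d, snorm s n ≠ ν)
    (a : ℝ) :
    {β : MCoord Lm d |
      β ∈ Populated s η reg ν ∪ Nmin s η reg ν ∧ homg s η α β < a}.Finite := by
  classical
  -- split into polynomial part and Nmin part
  have hpoly : {β : MCoord Lm d | β ∈ PolySet ∧ homg s η α β < a}.Finite := by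
    refine Set.Finite.subset (((finite_snorm_le s hs (a + η)).image
      (fun n : Nd d => Finsupp.single (Sum.inr n : Coord Lm d) (1 : ℕ)))) ?_
    rintro β ⟨⟨n, rfl⟩, hh⟩
    refine ⟨n, ?_, rfl⟩
    have hcomp : homg s η α (Finsupp.single (Sum.inr n : Coord Lm d) (1 : ℕ)) =
        (snorm s n - η) * ((1 : ℕ) : ℝ) := by
      rw [homg, Finsupp.sum_single_index (by simp)]
    rw [hcomp] at hh
    push_cast at hh
    simp only [Set.mem_setOf_eq]
    linarith
  have hnmin : {β : MCoord Lm d | β ∈ Nmin s η reg ν ∧ homg s η α β < a}.Finite := by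
    -- positive lower bound κ on α - reg
    obtain ⟨κ, hκpos, hκmem⟩ := exists_pos_lb
      (S := Set.range fun l : Option Lm => α l - reg l) (Set.finite_range _)
      (by rintro x ⟨l, rfl⟩; show (0:ℝ) < α l - reg l; linarith [h1 l])
    have hκ : ∀ l : Option Lm, κ ≤ α l - reg l := fun l => hκmem _ ⟨l, rfl⟩
    -- upper bound R on reg
    obtain ⟨R₀, -, hR₀⟩ := Set.exists_max_image (Set.range reg) id
      (Set.finite_range _) (Set.range_nonempty _)
    have hR : ∀ l : Option Lm, reg l ≤ R₀ := fun l => hR₀ _ ⟨l, rfl⟩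
    -- lower bound A on α
    obtain ⟨A₀, -, hA₀⟩ := Set.exists_min_image (Set.range α) id
      (Set.finite_range _) (Set.range_nonempty _)
    have hA : ∀ l : Option Lm, A₀ ≤ α l := fun l => hA₀ _ ⟨l, rfl⟩
    -- positive gap δ below ν
    have hlowfin : {n : Nd d | snorm s n < ν}.Finite := by
      refine (finite_snorm_le s hs ν).subset ?_
      intro n hn
      simp only [Set.mem_setOf_eq] at hn ⊢
      exact le_of_lt hn
    obtain ⟨δ, hδpos, hδmem⟩ := exists_pos_lb
      (S := (fun n : Nd d => ν - snorm s n) '' {n : Nd d | snorm s n < ν})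
      (hlowfin.image _)
      (by rintro x ⟨n, hn, rfl⟩; simp only [Set.mem_setOf_eq] at hn; show (0:ℝ) < ν - snorm s n; linarith)
    have hδ : ∀ n : Nd d, snorm s n < ν → δ ≤ ν - snorm s n :=
      fun n hn => hδmem _ ⟨n, hn, rfl⟩
    -- minimal snorm above ν
    have hn0 : ν < snorm s (fun _ : Fin d => ⌈ν⌉₊ + 1) := by
      set n₀ : Nd d := fun _ : Fin d => ⌈ν⌉₊ + 1 with hn₀def
      have hterm : ((⌈ν⌉₊ + 1 : ℕ) : ℝ) ≤ snorm s n₀ := by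
        have := coord_le_snorm s hs n₀ ⟨0, hd⟩
        simpa [hn₀def] using this
      have : ν < ((⌈ν⌉₊ + 1 : ℕ) : ℝ) := by
        push_cast
        linarith [Nat.le_ceil ν]
      linarith
    obtain ⟨nm, hnm, hnmmin⟩ := Set.exists_min_image
      {n : Nd d | ν < snorm s n ∧ snorm s n ≤ snorm s (fun _ : Fin d => ⌈ν⌉₊ + 1)}
      (fun n => snorm s n)
      ((finite_snorm_le s hs _).subset (fun n hn => hn.2))
      ⟨_, hn0, le_rfl⟩
    set ρ : ℝ := snorm s nm with hρdef
    have hρν : ν < ρ := hnm.1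
    have hρ : ∀ n : Nd d, ν < snorm s n → ρ ≤ snorm s n := by
      intro n hn
      by_cases hb : snorm s n ≤ snorm s (fun _ : Fin d => ⌈ν⌉₊ + 1)
      · exact hnmmin n ⟨hn, hb⟩
      · have := hnmmin _ ⟨hn0, le_rfl⟩
        linarith [not_le.1 hb]
    -- the constants
    set H : ℝ := (η + R₀ - ν) / (ρ - ν) with hHdef
    set T : ℝ := max 0 (1 + 2 * H - 2 * (A₀ - R₀) / δ) with hTdef
    have hT0 : 0 ≤ T := le_max_left _ _
    set ρ' : ℝ := max ρ 0 with hρ'def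
    have hρ'ν : ν < ρ' := lt_of_lt_of_le hρν (le_max_left _ _)
    have hρ'0 : 0 ≤ ρ' := le_max_right _ _
    set lam : ℝ := min (min (δ / 2) (κ / (1 + T))) (min 1 ((ρ' - ν) / (1 + ρ'))) with hlamdef
    have hlampos : 0 < lam := by
      apply lt_min (lt_min (by linarith) (by positivity))
      apply lt_min one_pos
      apply div_pos (by linarith) (by linarith)
    have hlam1 : lam ≤ δ / 2 := le_trans (min_le_left _ _) (min_le_left _ _)
    have hlam2 : lam ≤ κ / (1 + T) := le_trans (min_le_left _ _) (min_le_right _ _)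
    have hlam3 : lam ≤ 1 := le_trans (min_le_right _ _) (min_le_left _ _)
    have hlam4 : lam ≤ (ρ' - ν) / (1 + ρ') := le_trans (min_le_right _ _) (min_le_right _ _)
    -- per-unit bound for polynomial coordinates
    have hPn : ∀ n : Nd d, ν < snorm s n → lam * (1 + snorm s n) ≤ snorm s n - ν := by
      intro n hn
      have hx0 : 0 ≤ snorm s n := snorm_nonneg' s hs n
      have hxρ' : ρ' ≤ snorm s n := max_le (hρ n hn) hx0
      have h1ρ' : (0 : ℝ) < 1 + ρ' := by linarith
      have hkey : lam * (1 + ρ') ≤ ρ' - ν := by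
        have := mul_le_mul_of_nonneg_right hlam4 (le_of_lt h1ρ')
        rwa [div_mul_cancel₀ _ (ne_of_gt h1ρ')] at this
      nlinarith [hlampos.le, hlam3, hkey]
    -- per-unit bound for tree coordinates
    have hPk : ∀ (l : Option Lm) (k : MNd d), Subcritical s η reg ν l k →
        lam * (1 + (mlen k : ℝ)) ≤
          α l + (η - ν) + k.sum fun n v => (ν - snorm s n) * (v : ℝ) := by
      intro l k hsc
      set S : ℝ := k.sum fun n v => (ν - snorm s n) * (v : ℝ) with hSdef
      have hfilter_eq : k.support.filter (fun n => ¬ snorm s n < ν) =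
          k.support.filter (fun n => ν < snorm s n) := by
        apply Finset.filter_congr
        intro n _
        constructor
        · intro hn
          exact lt_of_le_of_ne (not_lt.1 hn) (Ne.symm (h2 n))
        · intro hn
          exact not_lt.2 (le_of_lt hn)
      have hsplit : S = (∑ n ∈ k.support.filter (fun n => snorm s n < ν),
            (ν - snorm s n) * (k n : ℝ)) +
          ∑ n ∈ k.support.filter (fun n => ν < snorm s n),
            (ν - snorm s n) * (k n : ℝ) := by
        rw [hSdef, Finsupp.sum, ← hfilter_eq,
          Finset.sum_filter_add_sum_filter_not k.support (fun n => snorm s n < ν)]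
      set Slo : ℝ := ∑ n ∈ k.support.filter (fun n => snorm s n < ν),
        (ν - snorm s n) * (k n : ℝ) with hSlodef
      set Shi : ℝ := ∑ n ∈ k.support.filter (fun n => ν < snorm s n),
        (ν - snorm s n) * (k n : ℝ) with hShidef
      set Llo : ℝ := ∑ n ∈ k.support.filter (fun n => snorm s n < ν), (k n : ℝ) with hLlodef
      set Lhi : ℝ := ∑ n ∈ k.support.filter (fun n => ν < snorm s n), (k n : ℝ) with hLhidef
      have hmlen : (mlen k : ℝ) = Llo + Lhi := by
        have h1' : ((mlen k : ℕ) : ℝ) = ∑ n ∈ k.support, (k n : ℝ) := by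
          rw [mlen, Finsupp.sum]
          push_cast
          rfl
        rw [h1', hLlodef, hLhidef, ← hfilter_eq,
          Finset.sum_filter_add_sum_filter_not k.support (fun n => snorm s n < ν)]
      have hLlo0 : 0 ≤ Llo := Finset.sum_nonneg fun n _ => Nat.cast_nonneg _
      have hLhi0 : 0 ≤ Lhi := Finset.sum_nonneg fun n _ => Nat.cast_nonneg _
      have hlo : δ * Llo ≤ Slo := by
        rw [hLlodef, Finset.mul_sum]
        apply Finset.sum_le_sum
        intro n hn
        have hnlt : snorm s n < ν := (Finset.mem_filter.1 hn).2
        exact mul_le_mul_of_nonneg_right (hδ n hnlt) (Nat.cast_nonneg _)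
      have hhi : ν - η - reg l < Shi := subcritical_high hsc
      have hhiub : Shi ≤ (ν - ρ) * Lhi := by
        rw [hLhidef, Finset.mul_sum]
        apply Finset.sum_le_sum
        intro n hn
        have hnlt : ν < snorm s n := (Finset.mem_filter.1 hn).2
        exact mul_le_mul_of_nonneg_right (by linarith [hρ n hnlt]) (Nat.cast_nonneg _)
      have hLhiH : Lhi ≤ H := by
        rw [hHdef, le_div_iff₀ (by linarith : (0:ℝ) < ρ - ν)]
        nlinarith [hR l]
      have hκb : κ ≤ α l + (η - ν) + S := by
        have := subcritical_full hsc
        have := hκ l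
        linarith
      have hlin : (A₀ - R₀) + δ * ((mlen k : ℝ) - H) ≤ α l + (η - ν) + S := by
        have h5 : δ * ((mlen k : ℝ) - H) ≤ δ * Llo := by
          apply mul_le_mul_of_nonneg_left _ hδpos.le
          rw [hmlen]
          linarith
        have := hA l
        have := hR l
        linarith
      rcases le_or_gt (mlen k : ℝ) T with hT | hT
      · have h6 : lam * (1 + (mlen k : ℝ)) ≤ κ :=
          arith1 hκpos hT0 hlam2 hlampos (Nat.cast_nonneg _) hT
        linarith only [h6, hκb]
      · have hT' : 1 + 2 * H - 2 * (A₀ - R₀) / δ < (mlen k : ℝ) :=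
          lt_of_le_of_lt (le_max_right 0 _) hT
        have h6 : lam * (1 + (mlen k : ℝ)) ≤ (A₀ - R₀) + δ * ((mlen k : ℝ) - H) :=
          arith2 hδpos hlam1 hlampos (Nat.cast_nonneg _) hT'
        linarith only [h6, hlin]
    -- assemble
    set M₀ : ℝ := (a + (η - ν)) / lam with hM₀def
    set M : ℕ := ⌈M₀⌉₊ with hMdef
    have hFη : {n : Nd d | snorm s n < η}.Finite := by
      refine (finite_snorm_le s hs η).subset ?_
      intro n hn
      simp only [Set.mem_setOf_eq] at hn ⊢
      exact le_of_lt hn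
    have hK : {k : MNd d | ↑k.support ⊆ {n : Nd d | snorm s n < η} ∧
        ∀ n, k n ≤ M}.Finite := finsupp_bdd_finite hFη M
    have hGfin : ((Sum.inl '' ((Set.univ : Set (Option Lm)) ×ˢ
          {k : MNd d | ↑k.support ⊆ {n : Nd d | snorm s n < η} ∧ ∀ n, k n ≤ M})) ∪
        (Sum.inr '' {n : Nd d | snorm s n ≤ M₀}) : Set (Coord Lm d)).Finite :=
      ((Set.finite_univ.prod hK).image _).union ((finite_snorm_le s hs M₀).image _)
    refine Set.Finite.subset (finsupp_bdd_finite hGfin M) ?_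
    rintro β ⟨hβmem, hβh⟩
    obtain ⟨hbr, hsubc, hpoly0⟩ := hβmem
    have hsuppn : ∀ n : Nd d, Sum.inr n ∈ β.support → ν < snorm s n := by
      intro n hn
      have hne := Finsupp.mem_support_iff.1 hn
      by_contra hcon
      exact hne (hpoly0 n (lt_of_le_of_ne (not_lt.1 hcon) (h2 n)))
    have hterm : ∀ c ∈ β.support,
        lam * (auxW s c * (β c : ℝ)) ≤ auxF s η ν α c * (β c : ℝ) := by
      rintro (⟨l, k⟩ | n) hc
      · have hin := hPk l k (hsubc l k (Finsupp.mem_support_iff.1 hc))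
        simp only [auxW, auxF, Sum.elim_inl]
        rw [← mul_assoc]
        exact mul_le_mul_of_nonneg_right hin (Nat.cast_nonneg _)
      · have hin := hPn n (hsuppn n hc)
        simp only [auxW, auxF, Sum.elim_inr]
        rw [← mul_assoc]
        exact mul_le_mul_of_nonneg_right hin (Nat.cast_nonneg _)
    have hWpos : ∀ c : Coord Lm d, 1 ≤ auxW s c := by
      rintro (⟨l, k⟩ | n)
      · simp only [auxW, Sum.elim_inl]
        linarith [Nat.cast_nonneg (mlen k) (α := ℝ)]
      · simp only [auxW, Sum.elim_inr]
        linarith [snorm_nonneg' s hs n]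
    have hsum : lam * (∑ c ∈ β.support, auxW s c * (β c : ℝ)) ≤ a + (η - ν) := by
      have h7 : ∑ c ∈ β.support, lam * (auxW s c * (β c : ℝ)) ≤
          ∑ c ∈ β.support, auxF s η ν α c * (β c : ℝ) := Finset.sum_le_sum hterm
      rw [← homg_eq s η α ν β hbr] at h7
      rw [Finset.mul_sum]
      linarith only [h7, hβh]
    have hbig : ∑ c ∈ β.support, auxW s c * (β c : ℝ) ≤ M₀ := by
      rw [hM₀def, le_div_iff₀ hlampos, mul_comm]
      exact hsum
    have hbound : ∀ c ∈ β.support, auxW s c ≤ M₀ ∧ (β c : ℝ) ≤ M₀ := by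
      intro c hc
      have h8 : auxW s c * (β c : ℝ) ≤ M₀ := by
        refine le_trans ?_ hbig
        exact Finset.single_le_sum (f := fun c => auxW s c * (β c : ℝ))
          (fun c _ => mul_nonneg (by linarith [hWpos c]) (Nat.cast_nonneg _)) hc
      have h9 : (1 : ℝ) ≤ (β c : ℝ) := by
        exact_mod_cast Nat.one_le_iff_ne_zero.2 (Finsupp.mem_support_iff.1 hc)
      exact ⟨by nlinarith [hWpos c], by nlinarith [hWpos c]⟩
    refine ⟨?_, ?_⟩
    · intro c hc
      have hc' : c ∈ β.support := hc
      rcases c with ⟨l, k⟩ | n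
      · refine Or.inl ⟨(l, k), ⟨Set.mem_univ _, ?_, ?_⟩, rfl⟩
        · intro n hn
          have hn' : n ∈ k.support := hn
          simp only [Set.mem_setOf_eq]
          exact subcritical_supp_lt (hsubc l k (Finsupp.mem_support_iff.1 hc'))
            (Finsupp.mem_support_iff.1 hn')
        · intro n
          have h10 : auxW s (Sum.inl (l, k)) ≤ M₀ := (hbound _ hc').1
          simp only [auxW, Sum.elim_inl] at h10
          have h11 : ((k n : ℕ) : ℝ) ≤ (M : ℝ) := by
            have h12 : ((k n : ℕ) : ℝ) ≤ (mlen k : ℝ) := by exact_mod_cast le_mlen k n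
            have h13 : (mlen k : ℝ) ≤ M₀ := by linarith
            exact h12.trans (h13.trans (Nat.le_ceil M₀))
          exact_mod_cast h11
      · refine Or.inr ⟨n, ?_, rfl⟩
        have h10 : auxW s (Sum.inr n) ≤ M₀ := (hbound _ hc').1
        simp only [auxW, Sum.elim_inr] at h10
        simp only [Set.mem_setOf_eq]
        linarith
    · intro c
      by_cases hc : c ∈ β.support
      · have h14 : (β c : ℝ) ≤ (M : ℝ) := ((hbound c hc).2).trans (Nat.le_ceil M₀)
        exact_mod_cast h14
      · simp [Finsupp.notMem_support_iff.1 hc]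

  refine Set.Finite.subset (hpoly.union hnmin) ?_
  rintro β ⟨hb, hh⟩
  rcases hb with hb | hb
  · rcases hb with hb | hb
    · exact Or.inl ⟨hb, hh⟩
    · exact Or.inr ⟨hb.1, hh⟩
  · exact Or.inr ⟨hb, hh⟩


end
end

section
/- Let γ' ∈ N, n' ∈ ℕ^d, γ ∈ P ∪ N_min and β ∈ M(coord). If (z^{γ'}D^{(n')})^{sc}_β^γ ≠ 0, then β ∈ N. -/
open scoped Classical

noncomputable section

variable {Lm : Type} {d : ℕ}

section Aux

variable {Lm : Type} {d : ℕ} {s : Fin d → ℝ} {η : ℝ} {reg : Option Lm → ℝ} {ν : ℝ}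

lemma brkt_add (a b : MCoord Lm d) : brkt (a + b) = brkt a + brkt b := by
  unfold brkt
  rw [Finsupp.sum_add_index']
  · intro x; rcases x with ⟨l, k⟩ | n <;> simp
  · intro x m n; rcases x with ⟨l, k⟩ | n <;> push_cast <;> ring

lemma nh_add (a b : MCoord Lm d) : nh (a + b) = nh a + nh b := by
  unfold nh
  rw [Finsupp.sum_add_index']
  · intro x; rcases x with ⟨(l|l), k⟩ | n <;> simp
  · intro x m n; rcases x with ⟨(l|l), k⟩ | n <;> simp

lemma mlen_add {I : Type} (a b : I →₀ ℕ) : mlen (a + b) = mlen a + mlen b := by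
  unfold mlen
  rw [Finsupp.sum_add_index'] <;> intros <;> rfl

lemma mlen_single {I : Type} (x : I) (v : ℕ) : mlen (Finsupp.single x v) = v := by
  unfold mlen
  exact Finsupp.sum_single_index rfl

lemma brkt_single_inl (l : Option Lm) (k : MNd d) :
    brkt (Finsupp.single (Sum.inl (l, k)) 1 : MCoord Lm d) = 1 - (mlen k : ℤ) := by
  unfold brkt
  rw [Finsupp.sum_single_index] <;> simp

lemma brkt_single_inr (n : Nd d) :
    brkt (Finsupp.single (Sum.inr n) 1 : MCoord Lm d) = 1 := by
  unfold brkt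
  rw [Finsupp.sum_single_index] <;> simp

lemma subM_add {a b : MCoord Lm d} (ha : SubcriticalM s η reg ν a)
    (hb : SubcriticalM s η reg ν b) : SubcriticalM s η reg ν (a + b) := by
  intro l k hx
  rw [Finsupp.add_apply] at hx
  rcases Nat.eq_zero_or_pos (a (Sum.inl (l, k))) with h0 | hp
  · exact hb l k (by omega)
  · exact ha l k (by omega)

lemma subM_single_inl {l : Option Lm} {k : MNd d}
    (h : Subcritical s η reg ν l k) :
    SubcriticalM s η reg ν (Finsupp.single (Sum.inl (l, k)) 1) := by
  intro l' k' hx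
  rw [Finsupp.single_apply] at hx
  split at hx
  · rename_i he
    obtain ⟨rfl, rfl⟩ : l = l' ∧ k = k' := by
      simpa [Prod.ext_iff] using he
    exact h
  · exact absurd rfl hx

lemma mem_NSet_add {a b : MCoord Lm d}
    (ha1 : brkt a = 0) (ha2 : SubcriticalM s η reg ν a)
    (ha3 : ∀ n : Nd d, snorm s n < ν → a (Sum.inr n) = 0)
    (hb : b ∈ NSet s η reg ν) : a + b ∈ NSet s η reg ν := by
  obtain ⟨⟨hb1, hb2, hb3⟩, hb4⟩ := hb
  refine ⟨⟨?_, subM_add ha2 hb2, ?_⟩, ?_⟩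
  · rw [brkt_add, ha1, hb1, zero_add]
  · intro n hn
    rw [Finsupp.add_apply, ha3 n hn, hb3 n hn]
  · rw [nh_add]; omega

lemma mcoord_cancel {a b c : MCoord Lm d} (h : a + c = b + c) : a = b := by
  ext x
  have := congrArg (fun f : MCoord Lm d => f x) h
  simp only [Finsupp.add_apply] at this
  omega

end Aux

theorem stmt11 {Lm : Type} [Fintype Lm] {d : ℕ} (hd : 1 ≤ d)
    (s : Fin d → ℝ) (hs : ∀ i, 1 ≤ s i) (η : ℝ) (reg : Option Lm → ℝ) (ν : ℝ)
    (γ' : MCoord Lm d) (hγ' : γ' ∈ NSet s η reg ν) (n' : Nd d)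
    (γ : MCoord Lm d) (hγ : γ ∈ PolySet ∪ Nmin s η reg ν)
    (β : MCoord Lm d) (h : coefZDsc s η reg ν γ' n' β γ ≠ 0) :
    β ∈ NSet s η reg ν := by
  classical
  have key : (∃ (l : Option Lm) (k : MNd d), γ (Sum.inl (l, k)) ≠ 0 ∧
        Subcritical s η reg ν l (k + Finsupp.single n' 1) ∧
        β + Finsupp.single (Sum.inl (l, k)) 1 =
          γ + Finsupp.single (Sum.inl (l, k + Finsupp.single n' 1)) 1 + γ') ∨
      (γ (Sum.inr n') ≠ 0 ∧ β + Finsupp.single (Sum.inr n') 1 = γ + γ') := by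
    by_contra hc
    push_neg at hc
    obtain ⟨hc1, hc2⟩ := hc
    apply h
    unfold coefZDsc
    have hB : (↑(γ (Sum.inr n')) : ℝ) *
        (if β + Finsupp.single (Sum.inr n') 1 = γ + γ' then (1:ℝ) else 0) = 0 := by
      rcases Nat.eq_zero_or_pos (γ (Sum.inr n')) with h0 | hp
      · rw [h0]; simp
      · rw [if_neg (hc2 (by omega)), mul_zero]
    rw [hB, add_zero]
    refine Finset.sum_eq_zero ?_
    intro x hx
    rcases x with ⟨l, k⟩ | n
    · simp only
      split
      · rename_i hsc
        rw [if_neg (hc1 l k (Finsupp.mem_support_iff.mp hx) hsc), mul_zero]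
      · rfl
    · rfl
  rcases key with ⟨l, k, hv, hsc, heq⟩ | ⟨hv, heq⟩
  · -- derivative-type term
    rcases hγ with hP | hN
    · exfalso
      obtain ⟨n, rfl⟩ := hP
      rw [Finsupp.single_apply] at hv
      simp at hv
    · obtain ⟨hN1, hN2, hN3⟩ := hN
      have hle : Finsupp.single (Sum.inl (l, k)) 1 ≤ γ :=
        Finsupp.single_le_iff.mpr (Nat.one_le_iff_ne_zero.mpr hv)
      obtain ⟨γ₀, hγ₀⟩ : ∃ γ₀, γ = γ₀ + Finsupp.single (Sum.inl (l, k)) 1 :=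
        ⟨γ - Finsupp.single (Sum.inl (l, k)) 1, (tsub_add_cancel_of_le hle).symm⟩
      have hβ : β = γ₀ + Finsupp.single (Sum.inl (l, k + Finsupp.single n' 1)) 1 + γ' := by
        ext x
        have h1 := congrArg (fun f : MCoord Lm d => f x) heq
        have h2 := congrArg (fun f : MCoord Lm d => f x) hγ₀
        simp only [Finsupp.add_apply] at h1 h2 ⊢
        omega
      have hγ₀le : ∀ x, γ₀ x ≤ γ x := by
        intro x; rw [hγ₀, Finsupp.add_apply]; omega
      rw [hβ]
      apply mem_NSet_add ?_ ?_ ?_ hγ'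
      · rw [brkt_add, brkt_single_inl]
        have hb0 : brkt γ₀ = (mlen k : ℤ) := by
          have := hN1
          rw [hγ₀, brkt_add, brkt_single_inl] at this
          omega
        rw [hb0, mlen_add, mlen_single]
        push_cast
        ring
      · refine subM_add ?_ (subM_single_inl hsc)
        intro l' k' hx
        exact hN2 l' k' (fun h0 => hx (Nat.le_zero.mp (h0 ▸ hγ₀le _)))
      · intro n hn
        rw [Finsupp.add_apply, Finsupp.single_apply, if_neg (by simp)]
        have := hN3 n hn
        have := hγ₀le (Sum.inr n)
        omega
  · -- polynomial-type term
    rcases hγ with hP | hN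
    · obtain ⟨n, rfl⟩ := hP
      have hnn : n = n' := by
        rw [Finsupp.single_apply] at hv
        by_contra hne
        exact hv (if_neg (by simp [hne]))
      subst hnn
      have hβ : β = γ' := by
        ext x
        have h1 := congrArg (fun f : MCoord Lm d => f x) heq
        simp only [Finsupp.add_apply] at h1
        omega
      rw [hβ]; exact hγ'
    · obtain ⟨hN1, hN2, hN3⟩ := hN
      have hle : Finsupp.single (Sum.inr n') 1 ≤ γ :=
        Finsupp.single_le_iff.mpr (Nat.one_le_iff_ne_zero.mpr hv)
      obtain ⟨γ₀, hγ₀⟩ : ∃ γ₀, γ = γ₀ + Finsupp.single (Sum.inr n') 1 :=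
        ⟨γ - Finsupp.single (Sum.inr n') 1, (tsub_add_cancel_of_le hle).symm⟩
      have hβ : β = γ₀ + γ' := by
        ext x
        have h1 := congrArg (fun f : MCoord Lm d => f x) heq
        have h2 := congrArg (fun f : MCoord Lm d => f x) hγ₀
        simp only [Finsupp.add_apply] at h1 h2 ⊢
        omega
      have hγ₀le : ∀ x, γ₀ x ≤ γ x := by
        intro x; rw [hγ₀, Finsupp.add_apply]; omega
      rw [hβ]
      apply mem_NSet_add ?_ ?_ ?_ hγ'
      · have := hN1
        rw [hγ₀, brkt_add, brkt_single_inr] at this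
        omega
      · intro l' k' hx
        exact hN2 l' k' (fun h0 => hx (Nat.le_zero.mp (h0 ▸ hγ₀le _)))
      · intro n hn
        have := hN3 n hn
        have := hγ₀le (Sum.inr n)
        omega

end
end

section
/- For every β ∈ M(coord), the set {(γ, γ', n') ∈ M(coord) × N × ℕ^d : |n'| < η and (z^{γ'}D^{(n')})_β^γ ≠ 0} is finite. -/
open scoped Classical

noncomputable section

variable {Lm : Type} {d : ℕ}

set_option maxHeartbeats 1000000 in
theorem stmt14 {Lm : Type} [Fintype Lm] {d : ℕ} (hd : 1 ≤ d)
    (s : Fin d → ℝ) (hs : ∀ i, 1 ≤ s i) (η : ℝ) (reg : Option Lm → ℝ) (ν : ℝ)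
    (β : MCoord Lm d) :
    {p : MCoord Lm d × MCoord Lm d × Nd d |
      p.2.1 ∈ NSet s η reg ν ∧ snorm s p.2.2 < η ∧
      coefZD p.2.1 p.2.2 β p.1 ≠ 0}.Finite := by
  classical
  set F : Set (Nd d) := {n | snorm s n < η} with hFdef
  have hF : F.Finite := by
    have hsub : F ⊆ Set.pi Set.univ (fun _ : Fin d => Set.Iic (⌈η⌉₊)) := by
      intro n hn i _
      have h1 : (n i : ℝ) ≤ snorm s n := by
        have h0 : (1:ℝ) * (n i : ℝ) ≤ s i * n i :=
          mul_le_mul_of_nonneg_right (hs i) (Nat.cast_nonneg _)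
        calc (n i : ℝ) = 1 * n i := by ring
          _ ≤ s i * n i := h0
          _ ≤ ∑ j, s j * n j := Finset.single_le_sum
              (fun j _ => mul_nonneg (le_trans zero_le_one (hs j)) (Nat.cast_nonneg _))
              (Finset.mem_univ i)
      have h2 : (n i : ℝ) ≤ (⌈η⌉₊ : ℝ) := (h1.trans hn.le).trans (Nat.le_ceil η)
      exact_mod_cast h2
    exact (Set.Finite.pi (fun i => Set.finite_Iic _)).subset hsub
  let g : Coord Lm d → MNd d := fun x => match x with
    | Sum.inl (_, k) => k
    | Sum.inr _ => 0
  let Ks : Finset (MNd d) := β.support.image g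
  set Kset : Set (MNd d) := ⋃ k0 ∈ (Ks : Set (MNd d)), Set.Iic k0 with hKsetdef
  have hK : Kset.Finite :=
    Set.Finite.biUnion Ks.finite_toSet (fun _ _ => Set.finite_Iic _)
  set Xset : Set (Coord Lm d) :=
    (Sum.inl '' ((Set.univ : Set (Option Lm)) ×ˢ Kset)) ∪ (Sum.inr '' F) with hXdef
  have hX : Xset.Finite := ((Set.finite_univ.prod hK).image _).union (hF.image _)
  set B : MCoord Lm d := β + hX.toFinset.sum (fun x => Finsupp.single x 1) with hBdef
  have hB : ∀ x ∈ Xset, β + Finsupp.single x 1 ≤ B := by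
    intro x hx
    have h : Finsupp.single x 1 ≤ hX.toFinset.sum (fun x => Finsupp.single x 1) :=
      Finset.single_le_sum (f := fun x => Finsupp.single x 1)
        (fun _ _ => zero_le) (hX.mem_toFinset.mpr hx)
    exact add_le_add_right h β
  apply Set.Finite.subset ((Set.finite_Iic B).prod ((Set.finite_Iic B).prod hF))
  rintro ⟨γ, γ', n'⟩ ⟨hγ'N, hn', hne⟩
  have hn'F : n' ∈ F := hn'
  suffices key : γ ≤ B ∧ γ' ≤ B by
    exact Set.mem_prod.mpr ⟨Set.mem_Iic.mpr key.1,
      Set.mem_prod.mpr ⟨Set.mem_Iic.mpr key.2, hn'F⟩⟩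
  · unfold coefZD at hne
    by_cases hterm : β + Finsupp.single (Sum.inr n') 1 = γ + γ'
    · have hx : Sum.inr n' ∈ Xset := Or.inr ⟨n', hn'F, rfl⟩
      have hle := hB _ hx
      rw [hterm] at hle
      exact ⟨le_trans le_self_add hle, le_trans le_add_self hle⟩
    · rw [if_neg hterm, mul_zero, add_zero, Finsupp.sum] at hne
      obtain ⟨x, hxsupp, hxne⟩ := Finset.exists_ne_zero_of_sum_ne_zero hne
      obtain (⟨l, k⟩ | n) := x
      · by_cases hE : β + Finsupp.single (Sum.inl (l, k)) 1 =
            γ + Finsupp.single (Sum.inl (l, k + Finsupp.single n' 1)) 1 + γ'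
        · have hkne : (Sum.inl (l, k) : Coord Lm d) ≠ Sum.inl (l, k + Finsupp.single n' 1) := by
            intro h
            have h2 : k = k + Finsupp.single n' 1 := by
              simpa using h
            have := DFunLike.congr_fun h2 n'
            simp at this
          have hy := DFunLike.congr_fun hE (Sum.inl (l, k + Finsupp.single n' 1))
          rw [Finsupp.add_apply, Finsupp.add_apply, Finsupp.add_apply,
            Finsupp.single_apply, Finsupp.single_apply, if_neg hkne, if_pos rfl] at hy
          have hymem : Sum.inl (l, k + Finsupp.single n' 1) ∈ β.support :=
            Finsupp.mem_support_iff.mpr (by omega)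
          have hkK : k + Finsupp.single n' 1 ∈ Ks := Finset.mem_image.mpr ⟨_, hymem, rfl⟩
          have hkKset : k ∈ Kset :=
            Set.mem_biUnion (by exact_mod_cast hkK) (Set.mem_Iic.mpr le_self_add)
          have hx : (Sum.inl (l, k) : Coord Lm d) ∈ Xset :=
            Or.inl ⟨(l, k), ⟨Set.mem_univ _, hkKset⟩, rfl⟩
          have hle := hB _ hx
          rw [hE] at hle
          exact ⟨le_trans (le_self_add.trans le_self_add) hle, le_trans le_add_self hle⟩
        · simp [hE] at hxne
      · simp at hxne



end
end

section
/- For every β ∈ M(coord), the set {(γ, γ', n') ∈ M(coord) × N × ℕ^d : |n'| < η + |γ'| and (z^{γ'}D^{(n')})_β^γ ≠ 0} is finite. -/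
open scoped Classical

noncomputable section

variable {Lm : Type} {d : ℕ}

theorem stmt15 {Lm : Type} [Fintype Lm] {d : ℕ} (hd : 1 ≤ d)
    (s : Fin d → ℝ) (hs : ∀ i, 1 ≤ s i) (η : ℝ)
    (α reg : Option Lm → ℝ) (ν : ℝ)
    (β : MCoord Lm d) :
    {p : MCoord Lm d × MCoord Lm d × Nd d |
      p.2.1 ∈ NSet s η reg ν ∧ snorm s p.2.2 < η + homg s η α p.2.1 ∧
      coefZD p.2.1 p.2.2 β p.1 ≠ 0}.Finite := by
  classical
  -- candidate n' coming from the support of β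
  set F1 : Finset (Nd d) := β.support.biUnion (fun c =>
    match c with
    | Sum.inl (_, k) => k.support
    | Sum.inr n => {n}) with hF1def
  -- bound C on homogeneities of γ' ≤ β
  have hTfin : (Set.Iic β).Finite := Set.finite_Iic β
  have hT0 : (0 : MCoord Lm d) ∈ hTfin.toFinset := by
    simp [Set.Finite.mem_toFinset]
  set Tim : Finset ℝ := hTfin.toFinset.image (homg s η α) with hTimdef
  have hTimne : Tim.Nonempty := ⟨_, Finset.mem_image_of_mem _ hT0⟩
  set C : ℝ := Tim.max' hTimne with hCdef
  set M : ℕ := ⌈η + C⌉₊ with hMdef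
  set F2 : Set (Nd d) := Set.univ.pi (fun _ : Fin d => Set.Iic M) with hF2def
  have hF2fin : F2.Finite := Set.Finite.pi (fun _ => Set.finite_Iic M)
  set F : Set (Nd d) := ↑F1 ∪ F2 with hFdef
  have hFfin : F.Finite := F1.finite_toSet.union hF2fin
  -- candidate extra coordinates
  set U : Finset (Coord Lm d) := β.support.biUnion (fun c =>
    match c with
    | Sum.inl (l, k'') => k''.support.image
        (fun m => Sum.inl (l, k'' - Finsupp.single m 1))
    | Sum.inr _ => ∅) with hUdef
  set V : Set (Coord Lm d) := ↑U ∪ (Sum.inr '' F) with hVdef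
  have hVfin : V.Finite := U.finite_toSet.union (hFfin.image _)
  set K : Set (MCoord Lm d) := ⋃ x ∈ V, Set.Iic (β + Finsupp.single x 1) with hKdef
  have hKfin : K.Finite := hVfin.biUnion (fun x _ => Set.finite_Iic _)
  apply Set.Finite.subset (hKfin.prod (hKfin.prod hFfin))
  rintro ⟨γ, γ', n'⟩ ⟨-, hhom, hne⟩
  have hcases : (∃ l k, γ (Sum.inl (l,k)) ≠ 0 ∧
      β + Finsupp.single (Sum.inl (l, k)) 1 =
        γ + Finsupp.single (Sum.inl (l, k + Finsupp.single n' 1)) 1 + γ') ∨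
      (γ (Sum.inr n') ≠ 0 ∧ β + Finsupp.single (Sum.inr n') 1 = γ + γ') := by
    by_contra hcon
    push_neg at hcon
    apply hne
    unfold coefZD
    rw [Finsupp.sum]
    rw [Finset.sum_eq_zero, zero_add]
    · rcases eq_or_ne (γ (Sum.inr n')) 0 with h | h
      · simp [h]
      · rw [if_neg (hcon.2 h), mul_zero]
    · rintro (⟨l, k⟩ | n) hx
      · dsimp only
        rw [if_neg (hcon.1 l k (Finsupp.mem_support_iff.mp hx)), mul_zero]
      · rfl
  rcases hcases with ⟨l, k, hγlk, heq⟩ | ⟨hγn, heq⟩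
  · -- case 1
    set c : Coord Lm d := Sum.inl (l, k + Finsupp.single n' 1) with hcdef
    have hkne : (Sum.inl (l, k) : Coord Lm d) ≠ c := by
      rw [hcdef]
      intro h
      have h2 : k = k + Finsupp.single n' 1 := by
        simpa using h
      have := DFunLike.congr_fun h2 n'
      simp at this
    have hβc : β c ≠ 0 := by
      have h1 := DFunLike.congr_fun heq c
      rw [hcdef] at h1 ⊢
      simp only [Finsupp.add_apply, Finsupp.single_apply] at h1
      simp only [if_true] at h1
      rw [if_neg (hcdef ▸ hkne)] at h1
      omega
    have hcmem : c ∈ β.support := Finsupp.mem_support_iff.mpr hβc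
    have hn'F : n' ∈ F := by
      rw [hFdef]
      left
      refine Finset.mem_coe.mpr (Finset.mem_biUnion.mpr ⟨c, hcmem, ?_⟩)
      rw [hcdef]
      dsimp only
      simp [Finsupp.mem_support_iff, Finsupp.add_apply]
    have hxU : (Sum.inl (l, k) : Coord Lm d) ∈ U := by
      rw [hUdef]
      refine Finset.mem_biUnion.mpr ⟨c, hcmem, ?_⟩
      rw [hcdef]
      dsimp only
      refine Finset.mem_image.mpr ⟨n', ?_, ?_⟩
      · simp [Finsupp.mem_support_iff, Finsupp.add_apply]
      · rw [add_tsub_cancel_right]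
    have hxV : (Sum.inl (l, k) : Coord Lm d) ∈ V := Or.inl hxU
    have hγle : γ ≤ β + Finsupp.single (Sum.inl (l, k)) 1 := by
      rw [Finsupp.le_def]
      intro y
      have h1 := DFunLike.congr_fun heq y
      simp only [Finsupp.add_apply] at h1 ⊢
      omega
    have hγ'le : γ' ≤ β + Finsupp.single (Sum.inl (l, k)) 1 := by
      rw [Finsupp.le_def]
      intro y
      have h1 := DFunLike.congr_fun heq y
      simp only [Finsupp.add_apply] at h1 ⊢
      omega
    exact ⟨Set.mem_biUnion hxV hγle, Set.mem_biUnion hxV hγ'le, hn'F⟩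
  · -- case 2
    have hn'F : n' ∈ F := by
      rcases eq_or_ne (β (Sum.inr n')) 0 with hb | hb
      · -- γ' ≤ β, use the homogeneity bound
        have hγ'le : γ' ≤ β := by
          rw [Finsupp.le_def]
          intro y
          have h1 := DFunLike.congr_fun heq y
          rcases eq_or_ne y (Sum.inr n' : Coord Lm d) with rfl | hy
          · simp only [Finsupp.add_apply, Finsupp.single_apply] at h1
            simp only [if_true] at h1
            omega
          · simp only [Finsupp.add_apply, Finsupp.single_apply] at h1
            rw [if_neg (Ne.symm hy)] at h1
            omega
        have hCb : homg s η α γ' ≤ C :=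
          Finset.le_max' _ _ (Finset.mem_image_of_mem _ (hTfin.mem_toFinset.mpr hγ'le))
        have hsn : ∀ i, (n' i : ℝ) ≤ snorm s n' := by
          intro i
          unfold snorm
          calc (n' i : ℝ) ≤ s i * (n' i : ℝ) :=
                le_mul_of_one_le_left (Nat.cast_nonneg _) (hs i)
            _ ≤ ∑ j, s j * (n' j : ℝ) :=
                Finset.single_le_sum
                  (fun j _ => mul_nonneg (le_trans zero_le_one (hs j)) (Nat.cast_nonneg _))
                  (Finset.mem_univ i)
        right
        rw [hF2def]
        intro i _
        have h3 : (n' i : ℝ) < (M : ℝ) := by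
          calc (n' i : ℝ) ≤ snorm s n' := hsn i
            _ < η + homg s η α γ' := hhom
            _ ≤ η + C := by linarith
            _ ≤ (M : ℝ) := Nat.le_ceil _
        exact Set.mem_Iic.mpr (le_of_lt (Nat.cast_lt.mp h3))
      · left
        refine Finset.mem_coe.mpr (Finset.mem_biUnion.mpr
          ⟨Sum.inr n', Finsupp.mem_support_iff.mpr hb, ?_⟩)
        dsimp only
        exact Finset.mem_singleton_self n'
    have hxV : (Sum.inr n' : Coord Lm d) ∈ V := Or.inr ⟨n', hn'F, rfl⟩
    have hγle : γ ≤ β + Finsupp.single (Sum.inr n') 1 := by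
      rw [Finsupp.le_def]; intro y
      have h1 := DFunLike.congr_fun heq y
      simp only [Finsupp.add_apply] at h1 ⊢
      omega
    have hγ'le : γ' ≤ β + Finsupp.single (Sum.inr n') 1 := by
      rw [Finsupp.le_def]; intro y
      have h1 := DFunLike.congr_fun heq y
      simp only [Finsupp.add_apply] at h1 ⊢
      omega
    exact ⟨Set.mem_biUnion hxV hγle, Set.mem_biUnion hxV hγ'le, hn'F⟩



end
end
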